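/- For any nonnegative integer q₀, the set of integers {a(q₀+1) + b·q₀ : a, b ∈ ℤ, |a| + |b| ≤ q₀} equals the interval of integers {−q₀(q₀+1), …, q₀(q₀+1)}. -/

import Mathlib

lemma exists_rep (q : ℤ) (hq : 0 ≤ q) (n : ℤ) (h0 : 0 ≤ n) (h1 : n ≤ q * (q + 1)) :
    ∃ a b : ℤ, |a| + |b| ≤ q ∧ n = a * (q + 1) + b * q := by
  rcases eq_or_lt_of_le hq with hq0 | hq1
  · obtain rfl : q = 0 := hq0.symm
    exact ⟨0, 0, by simp, by simp; omega⟩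
  rcases eq_or_lt_of_le h1 with he | hlt
  · exact ⟨q, 0, by rw [abs_of_nonneg hq]; simp, by rw [he]; ring⟩
  set r := n % q with hr
  set k := n / q with hk
  have hdiv : q * k + r = n := Int.mul_ediv_add_emod n q
  have hr0 : 0 ≤ r := Int.emod_nonneg n (by omega)
  have hrq : r < q := Int.emod_lt_of_pos n hq1
  have hk0 : 0 ≤ k := Int.ediv_nonneg h0 hq
  have hkq : k ≤ q := by nlinarith
  by_cases hc : 2 * r - q ≤ k
  · refine ⟨r, k - r, ?_, by ring_nf; omega⟩
    rcases le_or_gt r k with h | h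
    · rw [abs_of_nonneg hr0, abs_of_nonneg (by omega)]; omega
    · rw [abs_of_nonneg hr0, abs_of_nonpos (by omega)]; omega
  · refine ⟨r - q, k - r + q + 1, ?_, by ring_nf; omega⟩
    rw [abs_of_nonpos (by omega), abs_of_nonneg (by omega)]; omega

/-- Lemma `L:q0`: for any nonnegative integer `q₀`,
`{a(q₀+1) + b·q₀ : |a| + |b| ≤ q₀} = {−q₀(q₀+1), …, q₀(q₀+1)}`. -/
theorem interval_representation (q₀ : ℕ) :
    {n : ℤ | ∃ a b : ℤ, |a| + |b| ≤ (q₀ : ℤ) ∧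
        n = a * ((q₀ : ℤ) + 1) + b * (q₀ : ℤ)} =
      Set.Icc (-((q₀ : ℤ) * ((q₀ : ℤ) + 1))) ((q₀ : ℤ) * ((q₀ : ℤ) + 1)) := by
  set q : ℤ := (q₀ : ℤ) with hq
  have hq0 : 0 ≤ q := Int.natCast_nonneg q₀
  ext n
  simp only [Set.mem_setOf_eq, Set.mem_Icc]
  constructor
  · rintro ⟨a, b, hab, rfl⟩
    have ha := abs_nonneg a
    have hb := abs_nonneg b
    have h1 : a * (q + 1) + b * q ≤ |a| * (q + 1) + |b| * q := by
      have := le_abs_self a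
      have := le_abs_self b
      nlinarith
    have h2 : -(|a| * (q + 1) + |b| * q) ≤ a * (q + 1) + b * q := by
      have := neg_abs_le a
      have := neg_abs_le b
      nlinarith
    constructor <;> nlinarith
  · rintro ⟨h1, h2⟩
    rcases le_or_gt 0 n with h | h
    · exact exists_rep q hq0 n h h2
    · obtain ⟨a, b, hab, he⟩ := exists_rep q hq0 (-n) (by omega) (by omega)
      exact ⟨-a, -b, by simpa using hab, by linear_combination -he⟩
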